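/- arXiv:2406.18973 — 7 statements merged into one kernel-verified Lean document; each statement's English description precedes it below -/
import Mathlib

section
/- Let A₁, A₂ be Schur stable n×n real matrices. Then (−1)ⁿ det(αA₁ + (1−α)A₂ − I) > 0 for all α ∈ [0,1] if and only if the matrix (I − A₁)(I − A₂)⁻¹ has no negative real eigenvalue. -/
open Matrix Complex Polynomial Filter

lemma my_eval_charpoly {n : ℕ} {R : Type*} [CommRing R] (M : Matrix (Fin n) (Fin n) R) (t : R) :
    (Matrix.charpoly M).eval t = Matrix.det (t • (1 : Matrix (Fin n) (Fin n) R) - M) := by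
  rw [Matrix.charpoly, ← coe_evalRingHom, RingHom.map_det]
  congr 1
  ext i j
  by_cases h : i = j
  · subst h
    simp [charmatrix_apply_eq, Matrix.one_apply]
  · simp [charmatrix_apply_ne _ _ _ h, Matrix.one_apply, h]

lemma pos_on_of_ne {f : ℝ → ℝ} (hf : Continuous f) {a b : ℝ}
    (hne : ∀ x ∈ Set.Icc a b, f x ≠ 0) (hb : 0 < f b) {x : ℝ} (hx : x ∈ Set.Icc a b) :
    0 < f x := by
  rcases lt_trichotomy (f x) 0 with h | h | h
  · exfalso
    obtain ⟨y, hy, hfy⟩ := intermediate_value_Icc hx.2 hf.continuousOn ⟨h.le, hb.le⟩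
    exact hne y ⟨hx.1.trans hy.1, hy.2⟩ hfy
  · exact absurd h (hne x hx)
  · exact h

lemma schur_no_real_root {n : ℕ} (A : Matrix (Fin n) (Fin n) ℝ)
    (h : ∀ lam : ℂ, Matrix.det (lam • (1 : Matrix (Fin n) (Fin n) ℂ) - A.map Complex.ofReal) = 0 →
      ‖lam‖ < 1) (x : ℝ) (hx : 1 ≤ x) :
    (Matrix.charpoly A).eval x ≠ 0 := by
  intro h0
  have hmap : (A.map Complex.ofReal).charpoly = A.charpoly.map Complex.ofRealHom := by
    rw [← Matrix.charpoly_map]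
    rfl
  have hc : Matrix.det ((x : ℂ) • (1 : Matrix (Fin n) (Fin n) ℂ) - A.map Complex.ofReal) = 0 := by
    rw [← my_eval_charpoly, hmap]
    have : ((x : ℝ) : ℂ) = Complex.ofRealHom x := rfl
    rw [this, eval_map, eval₂_at_apply, h0, map_zero]
  have := h _ hc
  rw [Complex.norm_real, Real.norm_eq_abs] at this
  linarith [le_abs_self x]

lemma schur_det_one_sub_pos {n : ℕ} (A : Matrix (Fin n) (Fin n) ℝ)
    (h : ∀ lam : ℂ, Matrix.det (lam • (1 : Matrix (Fin n) (Fin n) ℂ) - A.map Complex.ofReal) = 0 →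
      ‖lam‖ < 1) (hn : 0 < n) :
    0 < Matrix.det ((1 : Matrix (Fin n) (Fin n) ℝ) - A) := by
  have key : 0 < (Matrix.charpoly A).eval 1 := by
    have hmonic := Matrix.charpoly_monic A
    have hdeg : (Matrix.charpoly A).natDegree = n := by simp [Matrix.charpoly_natDegree_eq_dim]
    have hdeg' : 0 < (Matrix.charpoly A).degree := by
      rw [← natDegree_pos_iff_degree_pos, hdeg]; exact hn
    have htop : Tendsto (fun y => (Matrix.charpoly A).eval y) atTop atTop :=
      tendsto_atTop_of_leadingCoeff_nonneg _ hdeg' (by rw [hmonic.leadingCoeff]; norm_num)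
    obtain ⟨b, hbpos, hb1⟩ := ((htop.eventually (eventually_gt_atTop 0)).and
      (eventually_ge_atTop (1:ℝ))).exists
    exact pos_on_of_ne (Matrix.charpoly A).continuous
      (fun y hy => schur_no_real_root A h y hy.1) hbpos ⟨le_refl 1, hb1⟩
  rw [my_eval_charpoly] at key
  simpa using key

lemma key_factor {n : ℕ} (B₁ B₂ : Matrix (Fin n) (Fin n) ℝ) (hB₂ : IsUnit B₂.det)
    (α : ℝ) (hα : 0 < α) :
    Matrix.det (α • B₁ + (1 - α) • B₂) =
      (-α) ^ n * Matrix.det (((α - 1) / α) • (1 : Matrix (Fin n) (Fin n) ℝ) - B₁ * B₂⁻¹)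
        * Matrix.det B₂ := by
  have h1 : α • B₁ + (1 - α) • B₂ = (α • (B₁ * B₂⁻¹) + (1 - α) • 1) * B₂ := by
    rw [add_mul, Matrix.smul_mul, Matrix.smul_mul, one_mul,
      Matrix.nonsing_inv_mul_cancel_right _ _ hB₂]
  have h2 : α • (B₁ * B₂⁻¹) + (1 - α) • (1 : Matrix (Fin n) (Fin n) ℝ)
      = (-α) • (((α - 1) / α) • (1 : Matrix (Fin n) (Fin n) ℝ) - B₁ * B₂⁻¹) := by
    rw [smul_sub, smul_smul, neg_smul α (B₁ * B₂⁻¹), sub_neg_eq_add, add_comm]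
    congr 1
    have : -α * ((α - 1) / α) = 1 - α := by field_simp; ring
    rw [this]
  rw [h1, Matrix.det_mul, h2, Matrix.det_smul, Fintype.card_fin]

theorem lemma1_det_pos_iff_no_neg_eigenvalue (n : ℕ) (A₁ A₂ : Matrix (Fin n) (Fin n) ℝ)
    (h₁ : ∀ lam : ℂ, Matrix.det (lam • (1 : Matrix (Fin n) (Fin n) ℂ) - A₁.map Complex.ofReal) = 0 →
      ‖lam‖ < 1)
    (h₂ : ∀ lam : ℂ, Matrix.det (lam • (1 : Matrix (Fin n) (Fin n) ℂ) - A₂.map Complex.ofReal) = 0 →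
      ‖lam‖ < 1) :
    (∀ α ∈ Set.Icc (0 : ℝ) 1,
        0 < (-1 : ℝ) ^ n * Matrix.det (α • A₁ + (1 - α) • A₂ - 1)) ↔
      ¬ ∃ lam : ℝ, lam < 0 ∧
        Matrix.det (lam • (1 : Matrix (Fin n) (Fin n) ℝ) - (1 - A₁) * (1 - A₂)⁻¹) = 0 := by
  rcases Nat.eq_zero_or_pos n with hn | hn
  · subst hn
    simp [Matrix.det_isEmpty]
  set B₁ := (1 : Matrix (Fin n) (Fin n) ℝ) - A₁ with hB₁def
  set B₂ := (1 : Matrix (Fin n) (Fin n) ℝ) - A₂ with hB₂def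
  have d₁pos : 0 < B₁.det := schur_det_one_sub_pos A₁ h₁ hn
  have d₂pos : 0 < B₂.det := schur_det_one_sub_pos A₂ h₂ hn
  have hu₂ : IsUnit B₂.det := isUnit_iff_ne_zero.mpr d₂pos.ne'
  have hsq : ((-1:ℝ)^n) * ((-1:ℝ)^n) = 1 := by rw [← mul_pow]; norm_num
  have hid : ∀ α : ℝ, (-1:ℝ)^n * Matrix.det (α • A₁ + (1-α) • A₂ - 1)
      = Matrix.det (α • B₁ + (1-α) • B₂) := by
    intro α
    have hm : α • A₁ + (1-α) • A₂ - 1 = -(α • B₁ + (1-α) • B₂) := by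
      rw [hB₁def, hB₂def]
      module
    rw [hm, Matrix.det_neg, Fintype.card_fin, ← mul_assoc, hsq, one_mul]
  constructor
  · rintro hpos ⟨lam, hlam, hdet⟩
    have h1lam : (0:ℝ) < 1 - lam := by linarith
    set α := 1/(1-lam) with hαdef
    have hα0 : 0 < α := by positivity
    have hα1 : α ≤ 1 := by rw [hαdef, div_le_one h1lam]; linarith
    have hleq : (α - 1)/α = lam := by
      rw [hαdef]
      field_simp
      ring
    have hcontr := hpos α ⟨hα0.le, hα1⟩
    rw [hid, key_factor _ _ hu₂ α hα0, hleq, hdet] at hcontr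
    simp at hcontr
  · intro hne α hα
    rw [hid]
    rcases eq_or_lt_of_le hα.1 with h0 | h0
    · rw [← h0]
      simpa using d₂pos
    · rw [key_factor _ _ hu₂ α h0]
      set lam := (α - 1)/α with hlamdef
      have hlam0 : lam ≤ 0 := div_nonpos_of_nonpos_of_nonneg (by linarith [hα.2]) h0.le
      set B := B₁ * B₂⁻¹ with hBdef
      have hinvpos : 0 < B₂⁻¹.det := by
        have hmul : B₂⁻¹.det * B₂.det = 1 := by
          rw [← Matrix.det_mul, Matrix.nonsing_inv_mul _ hu₂, Matrix.det_one]
        have := eq_one_div_of_mul_eq_one_left hmul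
        rw [this]
        positivity
      have hf0 : 0 < (-1:ℝ)^n * (Matrix.charpoly B).eval 0 := by
        rw [my_eval_charpoly]
        have : (0:ℝ) • (1 : Matrix (Fin n) (Fin n) ℝ) - B = -B := by simp
        rw [this, Matrix.det_neg, Fintype.card_fin, ← mul_assoc, hsq, one_mul, hBdef,
          Matrix.det_mul]
        exact mul_pos d₁pos hinvpos
      have hfpos : 0 < (-1:ℝ)^n * (Matrix.charpoly B).eval lam := by
        apply pos_on_of_ne (a := lam) (b := 0)
          (f := fun t => (-1:ℝ)^n * (Matrix.charpoly B).eval t)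
          (continuous_const.mul (Matrix.charpoly B).continuous) _ hf0 ⟨le_refl lam, hlam0⟩
        intro x hx hfx
        have hev : (Matrix.charpoly B).eval x = 0 := by
          have hne1 : ((-1:ℝ)^n) ≠ 0 := by positivity
          exact (mul_eq_zero.mp hfx).resolve_left hne1
        rcases lt_or_eq_of_le hx.2 with hxlt | hxeq
        · exact hne ⟨x, hxlt, by rw [← my_eval_charpoly]; exact hev⟩
        · rw [hxeq] at hfx
          exact hf0.ne' hfx
      have hdet : Matrix.det (lam • (1 : Matrix (Fin n) (Fin n) ℝ) - B)
          = (Matrix.charpoly B).eval lam := (my_eval_charpoly B lam).symm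
      rw [hdet]
      have heq : (-α)^n * (Matrix.charpoly B).eval lam * B₂.det
          = α^n * ((-1:ℝ)^n * (Matrix.charpoly B).eval lam) * B₂.det := by
        rw [neg_pow]
        ring
      rw [heq]
      exact mul_pos (mul_pos (pow_pos h0 n) hfpos) d₂pos
end

section
/- Let A₁, A₂ be Schur stable n×n real matrices and C(α) = αA₁ + (1−α)A₂. Then 1 is not an eigenvalue of C(α) for any α ∈ [0,1] if and only if (I − A₁)(I − A₂)⁻¹ has no negative real eigenvalue. -/
open Matrix Complex

theorem cor21_no_eigenvalue_one_iff (n : ℕ) (A₁ A₂ : Matrix (Fin n) (Fin n) ℝ)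
    (h₁ : ∀ lam : ℂ, Matrix.det (lam • (1 : Matrix (Fin n) (Fin n) ℂ) - A₁.map Complex.ofReal) = 0 →
      ‖lam‖ < 1)
    (h₂ : ∀ lam : ℂ, Matrix.det (lam • (1 : Matrix (Fin n) (Fin n) ℂ) - A₂.map Complex.ofReal) = 0 →
      ‖lam‖ < 1) :
    (∀ α ∈ Set.Icc (0 : ℝ) 1,
        Matrix.det ((α • A₁ + (1 - α) • A₂) - 1) ≠ 0) ↔
      ¬ ∃ lam : ℝ, lam < 0 ∧
        Matrix.det (lam • (1 : Matrix (Fin n) (Fin n) ℝ) - (1 - A₁) * (1 - A₂)⁻¹) = 0 := by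
  set M : Matrix (Fin n) (Fin n) ℝ := (1 - A₁) * (1 - A₂)⁻¹ with hMdef
  have hd1 : ((1 : Matrix (Fin n) (Fin n) ℝ) - A₁).det ≠ 0 := by
    intro h
    have h1 := h₁ 1 ?_
    · simp at h1
    · have : ((1 : ℂ) • (1 : Matrix (Fin n) (Fin n) ℂ) - A₁.map Complex.ofReal)
          = (Complex.ofRealHom.mapMatrix (1 - A₁)) := by
        ext i j
        simp [RingHom.mapMatrix_apply, Matrix.one_apply, Matrix.sub_apply, apply_ite]
      rw [this, ← RingHom.map_det, h]
      simp
  have hd2 : ((1 : Matrix (Fin n) (Fin n) ℝ) - A₂).det ≠ 0 := by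
    intro h
    have h1 := h₂ 1 ?_
    · simp at h1
    · have : ((1 : ℂ) • (1 : Matrix (Fin n) (Fin n) ℂ) - A₂.map Complex.ofReal)
          = (Complex.ofRealHom.mapMatrix (1 - A₂)) := by
        ext i j
        simp [RingHom.mapMatrix_apply, Matrix.one_apply, Matrix.sub_apply, apply_ite]
      rw [this, ← RingHom.map_det, h]
      simp
  have hMA : M * (1 - A₂) = 1 - A₁ :=
    Matrix.nonsing_inv_mul_cancel_right _ _ (isUnit_iff_ne_zero.mpr hd2)
  have hdetM : M.det ≠ 0 := by
    intro h
    apply hd1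
    rw [← hMA, Matrix.det_mul, h, zero_mul]
  -- key factorization
  have key : ∀ α : ℝ, α ≠ 0 →
      Matrix.det ((α • A₁ + (1 - α) • A₂) - 1)
        = α ^ n * Matrix.det (((α - 1) / α) • (1 : Matrix (Fin n) (Fin n) ℝ) - M)
            * Matrix.det (1 - A₂) := by
    intro α hα
    have hfac : (α • A₁ + (1 - α) • A₂) - 1
        = (α • (((α - 1) / α) • (1 : Matrix (Fin n) (Fin n) ℝ) - M)) * (1 - A₂) := by
      have h1 : α • (((α - 1) / α) • (1 : Matrix (Fin n) (Fin n) ℝ) - M)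
          = (α - 1) • (1 : Matrix (Fin n) (Fin n) ℝ) - α • M := by
        rw [smul_sub, smul_smul, mul_div_cancel₀ _ hα]
      rw [h1, Matrix.sub_mul, Matrix.smul_mul, Matrix.smul_mul, hMA, Matrix.one_mul]
      module
    rw [hfac, Matrix.det_mul, Matrix.det_smul, Fintype.card_fin, mul_assoc]
  constructor
  · rintro hL ⟨lam, hlam, hdet⟩
    have h1l : (0:ℝ) < 1 - lam := by linarith
    set α : ℝ := 1 / (1 - lam) with hαdef
    have hα0 : 0 < α := by positivity
    have hα1 : α ≤ 1 := by
      rw [hαdef, div_le_one h1l]; linarith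
    have hαne : α ≠ 0 := ne_of_gt hα0
    have hlameq : (α - 1) / α = lam := by
      rw [hαdef]; field_simp; ring
    have := hL α ⟨le_of_lt hα0, hα1⟩
    apply this
    rw [key α hαne, hlameq, hdet]
    ring
  · rintro hR α ⟨hα0, hα1⟩ hdet0
    rcases eq_or_ne α 0 with rfl | hαne
    · apply hd2
      have h0 : Matrix.det (-(1 - A₂)) = 0 := by
        rw [← hdet0]; congr 1; simp
      rw [Matrix.det_neg, Fintype.card_fin, mul_eq_zero] at h0
      rcases h0 with h | h
      · exact absurd h (pow_ne_zero n (by norm_num : (-1:ℝ) ≠ 0))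
      · exact h
    · rw [key α hαne] at hdet0
      have hαn : α ^ n ≠ 0 := pow_ne_zero _ hαne
      have hdetmid : Matrix.det (((α - 1) / α) • (1 : Matrix (Fin n) (Fin n) ℝ) - M) = 0 := by
        rcases mul_eq_zero.mp hdet0 with h | h
        · rcases mul_eq_zero.mp h with h' | h'
          · exact absurd h' hαn
          · exact h'
        · exact absurd h hd2
      have hlamle : (α - 1) / α ≤ 0 := by
        apply div_nonpos_of_nonpos_of_nonneg <;> linarith
      rcases lt_or_eq_of_le hlamle with hlt | heq
      · exact hR ⟨(α - 1) / α, hlt, hdetmid⟩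
      · rw [heq, zero_smul, zero_sub, Matrix.det_neg, Fintype.card_fin] at hdetmid
        rcases mul_eq_zero.mp hdetmid with h | h
        · exact pow_ne_zero n (by norm_num : (-1:ℝ) ≠ 0) h
        · exact hdetM h
end

section
/- Let A₁, A₂ be Schur stable n×n real matrices and C(α) = αA₁ + (1−α)A₂. Then det(C(α) + I) > 0 for all α ∈ [0,1] if and only if (I + A₁)(I + A₂)⁻¹ has no negative real eigenvalue. -/
open Matrix Complex

lemma aux_pos_of_nonvanishing (f : ℝ → ℝ) (hf : Continuous f) (h0 : 0 < f 0)
    (hne : ∀ t ∈ Set.Icc (0:ℝ) 1, f t ≠ 0) : ∀ t ∈ Set.Icc (0:ℝ) 1, 0 < f t := by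
  intro t ht
  by_contra h
  push_neg at h
  have hlt : f t < 0 := lt_of_le_of_ne h (hne t ht)
  have hsub := intermediate_value_Icc' ht.1 hf.continuousOn
  have : (0:ℝ) ∈ f '' Set.Icc 0 t := hsub ⟨hlt.le, h0.le⟩
  obtain ⟨s, hs, hfs⟩ := this
  exact hne s ⟨hs.1, hs.2.trans ht.2⟩ hfs

lemma aux_det_one_add_pos (n : ℕ) (A : Matrix (Fin n) (Fin n) ℝ)
    (h : ∀ lam : ℂ, Matrix.det (lam • (1 : Matrix (Fin n) (Fin n) ℂ) - A.map Complex.ofReal) = 0 →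
      ‖lam‖ < 1) : 0 < Matrix.det (1 + A) := by
  have hne : ∀ t ∈ Set.Icc (0:ℝ) 1, Matrix.det (1 + t • A) ≠ 0 := by
    intro t ht h0
    rcases eq_or_ne t 0 with rfl | ht0
    · simp at h0
    have htpos : 0 < t := lt_of_le_of_ne ht.1 (Ne.symm ht0)
    have htc : (t:ℂ) ≠ 0 := by exact_mod_cast ht0
    have hC : Matrix.det ((1 + t • A).map Complex.ofRealHom) = 0 := by
      have := (Complex.ofRealHom).map_det (1 + t • A)
      rw [h0, map_zero] at this
      simpa [RingHom.mapMatrix_apply] using this.symm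
    have key : ((-(t:ℂ)⁻¹) • (1 : Matrix (Fin n) (Fin n) ℂ) - A.map Complex.ofReal)
        = (-(t:ℂ)⁻¹) • ((1 + t • A).map Complex.ofRealHom) := by
      ext i j
      simp only [Matrix.map_apply, Matrix.one_apply, Matrix.smul_apply, Matrix.sub_apply,
        Matrix.add_apply, Complex.ofRealHom_eq_coe, smul_eq_mul]
      rcases eq_or_ne i j with rfl | hij
      · simp only [if_true]
        push_cast
        field_simp
        ring
      · simp only [hij, if_false]
        push_cast
        field_simp
        ring
    have hdet0 : Matrix.det ((-(t:ℂ)⁻¹) • (1 : Matrix (Fin n) (Fin n) ℂ) - A.map Complex.ofReal) = 0 := by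
      rw [key, Matrix.det_smul, hC, mul_zero]
    have := h _ hdet0
    have habs : ‖(-(t:ℂ)⁻¹)‖ = t⁻¹ := by
      rw [norm_neg, norm_inv, Complex.norm_real, Real.norm_eq_abs, abs_of_pos htpos]
    rw [habs] at this
    have h1 : (1:ℝ) ≤ t⁻¹ := (one_le_inv_iff₀).2 ⟨htpos, ht.2⟩
    linarith
  have hcont : Continuous fun t : ℝ => Matrix.det (1 + t • A) :=
    (continuous_const.add (continuous_id.smul continuous_const)).matrix_det
  have := aux_pos_of_nonvanishing _ hcont (by simp) hne 1 ⟨zero_le_one, le_refl 1⟩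
  simpa using this

theorem lemma2_det_pos_iff_no_neg_eigenvalue (n : ℕ) (A₁ A₂ : Matrix (Fin n) (Fin n) ℝ)
    (h₁ : ∀ lam : ℂ, Matrix.det (lam • (1 : Matrix (Fin n) (Fin n) ℂ) - A₁.map Complex.ofReal) = 0 →
      ‖lam‖ < 1)
    (h₂ : ∀ lam : ℂ, Matrix.det (lam • (1 : Matrix (Fin n) (Fin n) ℂ) - A₂.map Complex.ofReal) = 0 →
      ‖lam‖ < 1) :
    (∀ α ∈ Set.Icc (0 : ℝ) 1,
        0 < Matrix.det (α • A₁ + (1 - α) • A₂ + 1)) ↔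
      ¬ ∃ lam : ℝ, lam < 0 ∧
        Matrix.det (lam • (1 : Matrix (Fin n) (Fin n) ℝ) - (1 + A₁) * (1 + A₂)⁻¹) = 0 := by
  have d₁ : 0 < Matrix.det (1 + A₁) := aux_det_one_add_pos n A₁ h₁
  have d₂ : 0 < Matrix.det (1 + A₂) := aux_det_one_add_pos n A₂ h₂
  set M := (1 + A₁) * (1 + A₂)⁻¹ with hM
  have hu : IsUnit (1 + A₂).det := isUnit_iff_ne_zero.2 d₂.ne'
  have key : M * (1 + A₂) = 1 + A₁ := by
    rw [hM, mul_assoc, Matrix.nonsing_inv_mul _ hu, mul_one]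
  have hid : ∀ α : ℝ, α • A₁ + (1 - α) • A₂ + 1 = (α • M + (1 - α) • 1) * (1 + A₂) := by
    intro α
    rw [add_mul, Matrix.smul_mul, key, Matrix.smul_mul, one_mul]
    module
  have hdet : ∀ α : ℝ, Matrix.det (α • A₁ + (1 - α) • A₂ + 1)
      = Matrix.det (α • M + (1 - α) • 1) * Matrix.det (1 + A₂) := by
    intro α; rw [hid, Matrix.det_mul]
  have hsm : ∀ α lam : ℝ, -(α * lam) = 1 - α →
      α • M + (1 - α) • 1 = (-α) • (lam • (1 : Matrix (Fin n) (Fin n) ℝ) - M) := by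
    intro α lam hcnd
    rw [← hcnd]
    module
  constructor
  · rintro hpos ⟨lam, hlam, hdet0⟩
    set α := (1 - lam)⁻¹ with hα
    have hdlt : (0:ℝ) < 1 - lam := by linarith
    have hα0 : 0 < α := inv_pos.2 hdlt
    have hα1 : α ≤ 1 := by
      rw [hα]
      apply inv_le_one_of_one_le₀
      linarith
    have hcond : -(α * lam) = 1 - α := by
      rw [hα]; field_simp; ring
    have := hpos α ⟨hα0.le, hα1⟩
    rw [hdet α, hsm α lam hcond, Matrix.det_smul, hdet0, mul_zero, zero_mul] at this
    exact lt_irrefl 0 this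
  · intro hno
    have hnz : ∀ α ∈ Set.Icc (0:ℝ) 1, Matrix.det (α • M + (1 - α) • 1) ≠ 0 := by
      intro α hα
      rcases eq_or_lt_of_le hα.1 with h0 | h0
      · rw [← h0]; simp
      rcases eq_or_lt_of_le hα.2 with h1 | h1
      · rw [h1]
        simp only [sub_self, one_smul, zero_smul, add_zero]
        rw [hM, Matrix.det_mul, Matrix.det_nonsing_inv]
        exact mul_ne_zero d₁.ne' (by simpa [Ring.inverse_eq_inv'] using inv_ne_zero d₂.ne')
      · set lam := -((1 - α) / α) with hlamdef
        have hlam : lam < 0 := by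
          rw [hlamdef]
          have : 0 < (1 - α) / α := div_pos (by linarith) h0
          linarith
        have hcond : -(α * lam) = 1 - α := by
          rw [hlamdef]; field_simp
        rw [hsm α lam hcond, Matrix.det_smul]
        intro hz
        rcases mul_eq_zero.1 hz with hz1 | hz2
        · exact pow_ne_zero _ (neg_ne_zero.2 h0.ne') hz1
        · exact hno ⟨lam, hlam, hz2⟩
    have hcont : Continuous fun α : ℝ => Matrix.det (α • M + (1 - α) • 1) :=
      ((continuous_id.smul continuous_const).add
        ((continuous_const.sub continuous_id).smul continuous_const)).matrix_det
    intro α hα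
    rw [hdet α]
    exact mul_pos (aux_pos_of_nonvanishing _ hcont (by simp) hnz α hα) d₂
end

section
/- Let A₁, A₂ be Schur stable n×n real matrices and C(α) = αA₁ + (1−α)A₂. Then −1 is not an eigenvalue of C(α) for any α ∈ [0,1] if and only if (I + A₁)(I + A₂)⁻¹ has no negative real eigenvalue. -/
open Matrix Complex

lemma det_one_add_ne_zero {n : ℕ} (A : Matrix (Fin n) (Fin n) ℝ)
    (h : ∀ lam : ℂ, Matrix.det (lam • (1 : Matrix (Fin n) (Fin n) ℂ) - A.map Complex.ofReal) = 0 →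
      ‖lam‖ < 1) : Matrix.det (1 + A) ≠ 0 := by
  intro h0
  have hmap : (1 + A).map (Complex.ofReal) = 1 + A.map Complex.ofReal := by
    simp [Matrix.map_add]
  have key : Matrix.det ((-1 : ℂ) • (1 : Matrix (Fin n) (Fin n) ℂ) - A.map Complex.ofReal) = 0 := by
    have e : (-1 : ℂ) • (1 : Matrix (Fin n) (Fin n) ℂ) - A.map Complex.ofReal
        = (-1 : ℂ) • ((1 + A).map Complex.ofReal) := by
      rw [hmap]; simp [smul_add, neg_add, sub_eq_add_neg]
    rw [e, Matrix.det_smul]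
    have : ((1 + A).map Complex.ofReal).det = ((1 + A).det : ℂ) := by
      rw [show (1+A).map Complex.ofReal = Complex.ofRealHom.mapMatrix (1+A) from rfl,
        ← RingHom.map_det]
      rfl
    rw [this, h0]
    simp
  have := h (-1) key
  simp at this

lemma det_factor {n : ℕ} (A₁ A₂ : Matrix (Fin n) (Fin n) ℝ)
    (hB₂ : Matrix.det (1 + A₂) ≠ 0) (α lam : ℝ) (hrel : α * lam = α - 1) :
    Matrix.det ((α • A₁ + (1 - α) • A₂) + 1)
      = (-α) ^ n * Matrix.det (lam • (1 : Matrix (Fin n) (Fin n) ℝ)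
          - (1 + A₁) * (1 + A₂)⁻¹) * Matrix.det (1 + A₂) := by
  set B₁ := 1 + A₁
  set B₂ := 1 + A₂
  have hu : IsUnit B₂.det := isUnit_iff_ne_zero.mpr hB₂
  have e1 : (α • A₁ + (1 - α) • A₂) + 1 = α • B₁ + (1 - α) • B₂ := by
    simp only [B₁, B₂, smul_add]
    ext i j
    by_cases h : i = j <;> simp [Matrix.one_apply, h, Matrix.add_apply, Matrix.smul_apply] <;> ring
  have e2 : α • B₁ + (1 - α) • B₂
      = ((-α) • (lam • (1 : Matrix (Fin n) (Fin n) ℝ) - B₁ * B₂⁻¹)) * B₂ := by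
    rw [smul_sub, sub_mul, Matrix.smul_mul, Matrix.smul_mul, Matrix.smul_mul, smul_smul,
      Matrix.one_mul, Matrix.mul_assoc, Matrix.nonsing_inv_mul _ hu, Matrix.mul_one]
    have h1 : -α * lam = 1 - α := by linarith [hrel]
    rw [h1]
    ext i j
    simp [Matrix.add_apply, Matrix.sub_apply, Matrix.smul_apply]
    ring
  rw [e1, e2, Matrix.det_mul, Matrix.det_smul]
  simp [mul_assoc]

theorem cor22_no_eigenvalue_neg_one_iff (n : ℕ) (A₁ A₂ : Matrix (Fin n) (Fin n) ℝ)
    (h₁ : ∀ lam : ℂ, Matrix.det (lam • (1 : Matrix (Fin n) (Fin n) ℂ) - A₁.map Complex.ofReal) = 0 →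
      ‖lam‖ < 1)
    (h₂ : ∀ lam : ℂ, Matrix.det (lam • (1 : Matrix (Fin n) (Fin n) ℂ) - A₂.map Complex.ofReal) = 0 →
      ‖lam‖ < 1) :
    (∀ α ∈ Set.Icc (0 : ℝ) 1,
        Matrix.det ((α • A₁ + (1 - α) • A₂) + 1) ≠ 0) ↔
      ¬ ∃ lam : ℝ, lam < 0 ∧
        Matrix.det (lam • (1 : Matrix (Fin n) (Fin n) ℝ) - (1 + A₁) * (1 + A₂)⁻¹) = 0 := by
  have hB₁ := det_one_add_ne_zero A₁ h₁
  have hB₂ := det_one_add_ne_zero A₂ h₂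
  constructor
  · rintro H ⟨lam, hlam, hdet⟩
    set α := 1 / (1 - lam) with hαdef
    have h1 : (0:ℝ) < 1 - lam := by linarith
    have hα0 : 0 < α := by positivity
    have hα1 : α ≤ 1 := by rw [hαdef, div_le_one h1]; linarith
    have hrel : α * lam = α - 1 := by
      rw [hαdef]; field_simp; ring
    have := H α ⟨le_of_lt hα0, hα1⟩
    rw [det_factor A₁ A₂ hB₂ α lam hrel, hdet] at this
    simp at this
  · intro H α hα
    push_neg at H
    rcases eq_or_lt_of_le hα.2 with h1 | h1
    · subst h1
      simpa [add_comm] using hB₁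
    · set lam := -(1 - α) / α with hlamdef
      rcases eq_or_lt_of_le hα.1 with h0 | h0
      · simp only [← h0]
        simpa [add_comm] using hB₂
      · have hlam : lam < 0 := by
          rw [hlamdef]
          apply div_neg_of_neg_of_pos <;> linarith
        have hrel : α * lam = α - 1 := by
          rw [hlamdef]; field_simp; ring
        rw [det_factor A₁ A₂ hB₂ α lam hrel]
        have hd := H lam hlam
        have hpow : (-α) ^ n ≠ 0 := pow_ne_zero _ (by intro hc; simp at hc; linarith)
        exact mul_ne_zero (mul_ne_zero hpow hd) hB₂
end

section
/- If an n×n real matrix A has an eigenvalue λ ∈ ℂ with |λ| = 1 and λ ≠ ±1, then det(I − A·A) = 0, where A·A is the bialternate product of A with itself. -/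
open Matrix Complex

/-- The bialternate product of two `n × n` real matrices, indexed by pairs `(i,j)` with `i < j`. -/
noncomputable def bialt {n : ℕ} (A B : Matrix (Fin n) (Fin n) ℝ) :
    Matrix {p : Fin n × Fin n // p.1 < p.2} {p : Fin n × Fin n // p.1 < p.2} ℝ :=
  fun p q => (1 / 2) *
    ((A p.1.1 q.1.1 * B p.1.2 q.1.2 - A p.1.1 q.1.2 * B p.1.2 q.1.1) +
     (B p.1.1 q.1.1 * A p.1.2 q.1.2 - B p.1.1 q.1.2 * A p.1.2 q.1.1))

/-- Summing a function with zero diagonal over all pairs equals summing the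
symmetrization over ordered pairs. -/
lemma sum_pairs_eq {n : ℕ} (H : Fin n → Fin n → ℂ) (hd : ∀ j, H j j = 0) :
    ∑ q : {p : Fin n × Fin n // p.1 < p.2}, (H q.1.1 q.1.2 + H q.1.2 q.1.1)
      = ∑ j, ∑ k, H j k := by
  classical
  have hsub := Finset.sum_subtype (p := fun p : Fin n × Fin n => p.1 < p.2) (F := by infer_instance)
    (Finset.univ.filter fun p : Fin n × Fin n => p.1 < p.2)
    (by simp) (fun p : Fin n × Fin n => H p.1 p.2 + H p.2 p.1)
  rw [← hsub]
  have hswap : ∑ p : Fin n × Fin n, (if p.2 < p.1 then H p.1 p.2 else 0)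
      = ∑ p : Fin n × Fin n, (if p.1 < p.2 then H p.2 p.1 else 0) := by
    exact Fintype.sum_equiv (Equiv.prodComm _ _) _ _ (fun p => rfl)
  have hpt : ∀ p : Fin n × Fin n, H p.1 p.2
      = (if p.1 < p.2 then H p.1 p.2 else 0) + (if p.2 < p.1 then H p.1 p.2 else 0) := by
    intro p
    rcases lt_trichotomy p.1 p.2 with h | h | h
    · simp [h, not_lt_of_gt h]
    · simp [h, hd]
    · simp [h, not_lt_of_gt h]
  calc ∑ p ∈ Finset.univ.filter (fun p : Fin n × Fin n => p.1 < p.2),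
        (H p.1 p.2 + H p.2 p.1)
      = ∑ p : Fin n × Fin n, if p.1 < p.2 then (H p.1 p.2 + H p.2 p.1) else 0 := by
        rw [Finset.sum_filter]
    _ = ∑ p : Fin n × Fin n, ((if p.1 < p.2 then H p.1 p.2 else 0)
          + (if p.1 < p.2 then H p.2 p.1 else 0)) := by
        apply Finset.sum_congr rfl; intro p _; split <;> simp
    _ = ∑ p : Fin n × Fin n, H p.1 p.2 := by
        rw [Finset.sum_add_distrib, ← hswap, ← Finset.sum_add_distrib]
        exact Finset.sum_congr rfl fun p _ => (hpt p).symm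
    _ = ∑ j, ∑ k, H j k := Fintype.sum_prod_type _

theorem det_one_sub_bialt_eq_zero (n : ℕ) (A : Matrix (Fin n) (Fin n) ℝ) (lam : ℂ)
    (hmod : ‖lam‖ = 1) (h1 : lam ≠ 1) (h2 : lam ≠ -1)
    (heig : Matrix.det (lam • (1 : Matrix (Fin n) (Fin n) ℂ) - A.map Complex.ofReal) = 0) :
    Matrix.det (1 - bialt A A) = 0 := by
  classical
  set B : Matrix (Fin n) (Fin n) ℂ := A.map Complex.ofReal with hB
  obtain ⟨v, hv0, hv⟩ := (Matrix.exists_mulVec_eq_zero_iff).2 heig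
  have hAv : B *ᵥ v = lam • v := by
    have := hv
    rw [Matrix.sub_mulVec, Matrix.smul_mulVec, Matrix.one_mulVec, sub_eq_zero] at this
    exact this.symm
  set vb : Fin n → ℂ := fun i => starRingEnd ℂ (v i) with hvb
  have hAvb : B *ᵥ vb = (starRingEnd ℂ lam) • vb := by
    funext i
    have h := congrFun hAv i
    have h' := congrArg (starRingEnd ℂ) h
    simp only [Matrix.mulVec, dotProduct, map_sum, _root_.map_mul, Pi.smul_apply, smul_eq_mul] at h' ⊢
    simpa [hB, Matrix.map_apply, Complex.conj_ofReal, hvb] using h'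
  have hll : lam * starRingEnd ℂ lam = 1 := by
    rw [Complex.mul_conj]
    norm_cast
    rw [← Complex.sq_norm, hmod]; norm_num
  set w : {p : Fin n × Fin n // p.1 < p.2} → ℂ :=
    fun q => v q.1.1 * vb q.1.2 - v q.1.2 * vb q.1.1 with hw
  -- w is nonzero
  have hw0 : w ≠ 0 := by
    intro hzero
    have hrel : ∀ i j : Fin n, v i * vb j = v j * vb i := by
      intro i j
      rcases lt_trichotomy i j with h | h | h
      · have := congrFun hzero ⟨(i, j), h⟩
        simpa [hw, sub_eq_zero] using this
      · rw [h]
      · have := congrFun hzero ⟨(j, i), h⟩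
        simp only [hw, Pi.zero_apply, sub_eq_zero] at this
        exact this.symm
    obtain ⟨i0, hi0⟩ := Function.ne_iff.1 hv0
    have hi0' : v i0 ≠ 0 := by simpa using hi0
    have hvbne : vb i0 ≠ 0 := by simp [hvb, hi0']
    have hsum1 : ∑ j, B i0 j * v j = lam * v i0 := by
      simpa [Matrix.mulVec, dotProduct] using congrFun hAv i0
    have hsum2 : ∑ j, B i0 j * vb j = starRingEnd ℂ lam * vb i0 := by
      simpa [Matrix.mulVec, dotProduct] using congrFun hAvb i0
    have key2 : v i0 * ∑ j, B i0 j * vb j = vb i0 * ∑ j, B i0 j * v j := by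
      rw [Finset.mul_sum, Finset.mul_sum]
      apply Finset.sum_congr rfl
      intro j _
      calc v i0 * (B i0 j * vb j) = B i0 j * (v i0 * vb j) := by ring
        _ = B i0 j * (v j * vb i0) := by rw [hrel i0 j]
        _ = vb i0 * (B i0 j * v j) := by ring
    have heq : v i0 * (starRingEnd ℂ lam * vb i0) = vb i0 * (lam * v i0) := by
      rw [← hsum2, key2, hsum1]
    have hlam : starRingEnd ℂ lam = lam := by
      have h' : (starRingEnd ℂ lam) * (v i0 * vb i0) = lam * (v i0 * vb i0) := by
        linear_combination heq
      exact mul_right_cancel₀ (mul_ne_zero hi0' hvbne) h'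
    have him : lam.im = 0 := (Complex.conj_eq_iff_im.1 hlam)
    have hre : lam = (lam.re : ℂ) := Complex.ext (by simp) (by simp [him])
    have habs : |lam.re| = 1 := by
      rw [hre, Complex.norm_real, Real.norm_eq_abs] at hmod
      exact hmod
    rcases abs_eq (by norm_num : (0:ℝ) ≤ 1) |>.1 habs with h | h
    · exact h1 (by apply Complex.ext <;> simp [h, him])
    · exact h2 (by apply Complex.ext <;> simp [h, him])
  -- the key eigen-equation
  have hkey : ((bialt A A).map Complex.ofReal) *ᵥ w = w := by
    funext p
    have hAvi : ∀ k, ∑ j, B k j * v j = lam * v k := fun k => by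
      simpa [Matrix.mulVec, dotProduct] using congrFun hAv k
    have hAvbi : ∀ k, ∑ j, B k j * vb j = starRingEnd ℂ lam * vb k := fun k => by
      simpa [Matrix.mulVec, dotProduct] using congrFun hAvb k
    have hbform : ∀ q : {p : Fin n × Fin n // p.1 < p.2},
        ((bialt A A p q : ℝ) : ℂ)
          = B p.1.1 q.1.1 * B p.1.2 q.1.2 - B p.1.1 q.1.2 * B p.1.2 q.1.1 := by
      intro q
      simp only [bialt, hB, Matrix.map_apply]
      push_cast
      ring
    set H : Fin n → Fin n → ℂ :=
      fun j k => (B p.1.1 j * B p.1.2 k) * (v j * vb k - v k * vb j) with hH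
    have hd : ∀ j, H j j = 0 := by intro j; simp only [hH]; ring
    have hsum : (((bialt A A).map Complex.ofReal) *ᵥ w) p
        = ∑ q : {p : Fin n × Fin n // p.1 < p.2}, (H q.1.1 q.1.2 + H q.1.2 q.1.1) := by
      simp only [Matrix.mulVec, dotProduct, Matrix.map_apply]
      apply Finset.sum_congr rfl
      intro q _
      rw [hbform q]
      simp only [hH, hw]
      ring
    rw [hsum, sum_pairs_eq H hd]
    have hexp : ∑ j, ∑ k, H j k
        = (∑ j, B p.1.1 j * v j) * (∑ k, B p.1.2 k * vb k)
          - (∑ j, B p.1.1 j * vb j) * (∑ k, B p.1.2 k * v k) := by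
      rw [Finset.sum_mul_sum, Finset.sum_mul_sum, ← Finset.sum_sub_distrib]
      apply Finset.sum_congr rfl
      intro j _
      rw [← Finset.sum_sub_distrib]
      apply Finset.sum_congr rfl
      intro k _
      simp only [hH]
      ring
    rw [hexp, hAvi, hAvi, hAvbi, hAvbi]
    simp only [hw]
    have : lam * v p.1.1 * (starRingEnd ℂ lam * vb p.1.2)
        - starRingEnd ℂ lam * vb p.1.1 * (lam * v p.1.2)
        = (lam * starRingEnd ℂ lam) * (v p.1.1 * vb p.1.2 - v p.1.2 * vb p.1.1) := by ring
    rw [this, hll, one_mul]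
  -- conclude
  have hmv : ((1 - bialt A A).map Complex.ofReal) *ᵥ w = 0 := by
    have hmap : (1 - bialt A A).map Complex.ofReal
        = 1 - (bialt A A).map Complex.ofReal := by
      rw [Matrix.map_sub _ (by simp)]
      congr 1
      exact Matrix.map_one _ (by simp) (by simp)
    rw [hmap, Matrix.sub_mulVec, Matrix.one_mulVec, hkey, sub_self]
  have hdetC : ((1 - bialt A A).map Complex.ofReal).det = 0 :=
    Matrix.exists_mulVec_eq_zero_iff.1 ⟨w, hw0, hmv⟩
  have hmapdet := RingHom.map_det (algebraMap ℝ ℂ) (1 - bialt A A)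
  rw [RingHom.mapMatrix_apply] at hmapdet
  have hcoe : (1 - bialt A A).map (algebraMap ℝ ℂ) = (1 - bialt A A).map Complex.ofReal := by
    rfl
  rw [hcoe, hdetC] at hmapdet
  have hfin : ((1 - bialt A A).det : ℂ) = 0 := by
    rw [← Complex.coe_algebraMap]; exact hmapdet
  exact_mod_cast hfin
end

section
/- Suppose F₀ is invertible (d×d), F₁, F₂ ∈ ℝ^{d×d}, and let M = [[0, I_d], [−F₀⁻¹F₂, −F₀⁻¹F₁]]. Then det(F₀ + αF₁ + α²F₂) ≠ 0 for all α ∈ (0,1] if and only if M has no real eigenvalue in [1,∞). -/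
open Matrix

lemma key_det (d : ℕ) (F₀ F₁ F₂ : Matrix (Fin d) (Fin d) ℝ) (hF₀ : IsUnit F₀.det)
    (μ : ℝ) (hμ : μ ≠ 0) :
    Matrix.det (μ • (1 : Matrix (Fin d ⊕ Fin d) (Fin d ⊕ Fin d) ℝ) -
      Matrix.fromBlocks 0 1 (-(F₀⁻¹ * F₂)) (-(F₀⁻¹ * F₁))) =
    μ ^ (2 * d) * (F₀.det)⁻¹ *
      Matrix.det (F₀ + μ⁻¹ • F₁ + (μ⁻¹) ^ 2 • F₂) := by
  have hA : (μ • (1 : Matrix (Fin d) (Fin d) ℝ)) * (μ⁻¹ • 1) = 1 := by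
    rw [smul_mul_smul_comm, one_mul, mul_inv_cancel₀ hμ, one_smul]
  haveI : Invertible (μ • (1 : Matrix (Fin d) (Fin d) ℝ)) := invertibleOfRightInverse _ _ hA
  have hinv : ⅟ (μ • (1 : Matrix (Fin d) (Fin d) ℝ)) = μ⁻¹ • 1 := invOf_eq_right_inv hA
  have h1 : μ • (1 : Matrix (Fin d ⊕ Fin d) (Fin d ⊕ Fin d) ℝ) =
      Matrix.fromBlocks (μ • 1) 0 0 (μ • 1) := by
    rw [← Matrix.fromBlocks_one (l := Fin d) (m := Fin d) (α := ℝ),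
      Matrix.fromBlocks_smul, smul_zero]
  rw [h1, sub_eq_add_neg, Matrix.fromBlocks_neg, Matrix.fromBlocks_add]
  simp only [neg_zero, add_zero, zero_add, neg_neg]
  rw [Matrix.det_fromBlocks₁₁, hinv]
  have hF : F₀⁻¹ * F₀ = 1 := Matrix.nonsing_inv_mul _ hF₀
  have h3 : μ * μ⁻¹ ^ 2 = μ⁻¹ := by field_simp
  have h2 : (μ • 1 + F₀⁻¹ * F₁ - F₀⁻¹ * F₂ * (μ⁻¹ • 1) * (-1) :
      Matrix (Fin d) (Fin d) ℝ) =
      μ • (F₀⁻¹ * (F₀ + μ⁻¹ • F₁ + (μ⁻¹) ^ 2 • F₂)) := by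
    simp only [Matrix.mul_add, hF, Matrix.mul_smul, Matrix.mul_one, Matrix.mul_neg,
      smul_add, smul_smul, mul_inv_cancel₀ hμ, one_smul, h3, sub_neg_eq_add]
  rw [h2, Matrix.det_smul, Matrix.det_one, Matrix.det_smul, Matrix.det_mul,
    Matrix.det_nonsing_inv]
  simp only [mul_one, Ring.inverse_eq_inv, Fintype.card_fin, two_mul, pow_add]
  ring

theorem quadratic_pencil_nonsing_iff_no_eigenvalue_ge_one (d : ℕ)
    (F₀ F₁ F₂ : Matrix (Fin d) (Fin d) ℝ) (hF₀ : IsUnit F₀.det) :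
    (∀ α ∈ Set.Ioc (0 : ℝ) 1,
        Matrix.det (F₀ + α • F₁ + α ^ 2 • F₂) ≠ 0) ↔
      ¬ ∃ μ : ℝ, 1 ≤ μ ∧
        Matrix.det (μ • (1 : Matrix (Fin d ⊕ Fin d) (Fin d ⊕ Fin d) ℝ) -
          Matrix.fromBlocks 0 1 (-(F₀⁻¹ * F₂)) (-(F₀⁻¹ * F₁))) = 0 := by
  constructor
  · rintro h ⟨μ, hμ, hdet⟩
    have hμ0 : (0 : ℝ) < μ := lt_of_lt_of_le one_pos hμ
    rw [key_det d F₀ F₁ F₂ hF₀ μ hμ0.ne'] at hdet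
    have hα : μ⁻¹ ∈ Set.Ioc (0 : ℝ) 1 :=
      ⟨inv_pos.2 hμ0, inv_le_one_of_one_le₀ hμ⟩
    have := h μ⁻¹ hα
    have hpow : μ ^ (2 * d) ≠ 0 := pow_ne_zero _ hμ0.ne'
    have hinv : (F₀.det)⁻¹ ≠ 0 := inv_ne_zero hF₀.ne_zero
    exact this (by
      have := mul_eq_zero.mp hdet
      rcases this with h' | h'
      · rcases mul_eq_zero.mp h' with h'' | h''
        · exact absurd h'' hpow
        · exact absurd h'' hinv
      · exact h')
  · intro h α hα hdet
    have hα0 : (0 : ℝ) < α := hα.1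
    have hμ : (1 : ℝ) ≤ α⁻¹ := (one_le_inv₀ hα0).2 hα.2
    exact h ⟨α⁻¹, hμ, by
      rw [key_det d F₀ F₁ F₂ hF₀ α⁻¹ (inv_pos.2 hα0).ne', inv_inv, hdet, mul_zero]⟩
end

section
/- Let A₀ ∈ ℝ^{n×n}, b ∈ ℝⁿ, and c₁,…,c_N ∈ ℝⁿ, and set Aᵢ = A₀ + b·cᵢᵀ. For any convex combination A = α₁A₁ + ⋯ + α_N A_N (αᵢ ≥ 0, Σαᵢ = 1), the characteristic polynomial satisfies p_A(s) = α₁p_{A₁}(s) + ⋯ + α_N p_{A_N}(s), where p_M(s) = det(sI − M). -/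
open Matrix Polynomial

lemma det_add_col_mul_row_adj {K : Type*} [Field K] {n : ℕ}
    (M : Matrix (Fin n) (Fin n) K) (hM : M.det ≠ 0) (u v : Fin n → K) :
    (M + replicateCol (Fin 1) u * replicateRow (Fin 1) v).det = M.det + v ⬝ᵥ (M.adjugate *ᵥ u) := by
  have hU : IsUnit M.det := hM.isUnit
  have hadj : M.adjugate = M.det • M⁻¹ := by
    rw [Matrix.inv_def, smul_smul, Ring.inverse_eq_inv, mul_inv_cancel₀ hM, one_smul]
  rw [Matrix.det_add_mul (replicateCol (Fin 1) u) (replicateRow (Fin 1) v) hU, hadj, Matrix.det_fin_one]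
  rw [Matrix.add_apply, Matrix.one_apply_eq]
  rw [Matrix.smul_mulVec, dotProduct_smul]
  have : (replicateRow (Fin 1) v * M⁻¹ * replicateCol (Fin 1) u) 0 0 = v ⬝ᵥ (M⁻¹ *ᵥ u) := by
    simp [Matrix.mul_apply, Matrix.mulVec, dotProduct, Finset.mul_sum, Finset.sum_mul,
      mul_assoc]
    rw [Finset.sum_comm]
  rw [this, mul_add, mul_one, smul_eq_mul]

lemma det_add_col_mul_row_adj' {R : Type*} [CommRing R] [IsDomain R] {n : ℕ}
    (M : Matrix (Fin n) (Fin n) R) (hM : M.det ≠ 0) (u v : Fin n → R) :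
    (M + replicateCol (Fin 1) u * replicateRow (Fin 1) v).det = M.det + v ⬝ᵥ (M.adjugate *ᵥ u) := by
  let K := FractionRing R
  have hinj : Function.Injective (algebraMap R K) := IsFractionRing.injective R K
  apply hinj
  let f : R →+* K := algebraMap R K
  have hdet : ∀ A : Matrix (Fin n) (Fin n) R, f A.det = (A.map f).det :=
    fun A => RingHom.map_det f A
  have hdot : ∀ (x y : Fin n → R), f (x ⬝ᵥ y) = (f ∘ x) ⬝ᵥ (f ∘ y) := by
    intro x y; simp [dotProduct, map_sum, _root_.map_mul, Function.comp]
  have hmv : ∀ (A : Matrix (Fin n) (Fin n) R) (x : Fin n → R),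
      (f ∘ (A *ᵥ x)) = (A.map f) *ᵥ (f ∘ x) := by
    intro A x; funext i; simp [Matrix.mulVec, dotProduct, map_sum, _root_.map_mul, Function.comp]
  have hmap : (M + replicateCol (Fin 1) u * replicateRow (Fin 1) v).map f
      = M.map f + replicateCol (Fin 1) (f ∘ u) * replicateRow (Fin 1) (f ∘ v) := by
    ext i j
    simp [Matrix.mul_apply, map_sum, _root_.map_mul]
  rw [map_add, hdet, hdet, hmap, hdot, hmv, show M.adjugate.map ⇑f = (M.map ⇑f).adjugate from by simpa [RingHom.mapMatrix_apply] using f.map_adjugate M]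
  apply det_add_col_mul_row_adj
  rw [← hdet]
  intro h
  exact hM (hinj (h.trans (map_zero f).symm))

lemma charpoly_add_vecMulVec {n : ℕ} (A₀ : Matrix (Fin n) (Fin n) ℝ) (b v : Fin n → ℝ) :
    (A₀ + vecMulVec b v).charpoly
      = A₀.charpoly - (fun j => C (v j)) ⬝ᵥ ((charmatrix A₀).adjugate *ᵥ fun i => C (b i)) := by
  have hch : charmatrix (A₀ + vecMulVec b v)
      = charmatrix A₀ + replicateCol (Fin 1) (fun i => -C (b i)) * replicateRow (Fin 1) (fun j => C (v j)) := by
    ext i j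
    by_cases h : i = j <;>
      simp [h, Matrix.charmatrix_apply, Matrix.mul_apply, Matrix.vecMulVec_apply, map_add,
        _root_.map_mul]
    · ring
    · ring
  have hdet0 : (charmatrix A₀).det ≠ 0 := by
    have := A₀.charpoly_monic
    rw [Matrix.charpoly] at this
    exact this.ne_zero
  rw [Matrix.charpoly, hch, det_add_col_mul_row_adj' _ hdet0, ← Matrix.charpoly]
  rw [sub_eq_add_neg]
  congr 1
  rw [← dotProduct_neg]
  congr 1
  funext i
  simp [Matrix.mulVec, dotProduct, Finset.mul_sum]

theorem charpoly_convex_comb_rank_one (n N : ℕ) (A₀ : Matrix (Fin n) (Fin n) ℝ)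
    (b : Fin n → ℝ) (c : Fin N → Fin n → ℝ) (α : Fin N → ℝ)
    (hα0 : ∀ i, 0 ≤ α i) (hα1 : ∑ i, α i = 1) :
    (∑ i, α i • (A₀ + Matrix.vecMulVec b (c i))).charpoly =
      ∑ i, Polynomial.C (α i) * (A₀ + Matrix.vecMulVec b (c i)).charpoly := by
  have hsum : ∑ i, α i • (A₀ + Matrix.vecMulVec b (c i))
      = A₀ + Matrix.vecMulVec b (fun j => ∑ i, α i * c i j) := by
    ext i j
    simp only [Matrix.sum_apply, Matrix.smul_apply, Matrix.add_apply, Matrix.vecMulVec_apply,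
      smul_eq_mul, mul_add, Finset.sum_add_distrib, Finset.mul_sum]
    rw [← Finset.sum_mul, hα1, one_mul]
    congr 1
    exact Finset.sum_congr rfl fun k _ => by ring
  rw [hsum, charpoly_add_vecMulVec]
  have hrhs : ∀ i : Fin N, (A₀ + Matrix.vecMulVec b (c i)).charpoly
      = A₀.charpoly - (fun j => C (c i j)) ⬝ᵥ ((charmatrix A₀).adjugate *ᵥ fun k => C (b k)) :=
    fun i => charpoly_add_vecMulVec A₀ b (c i)
  simp only [hrhs, mul_sub, Finset.sum_sub_distrib, ← Finset.sum_mul]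
  rw [← map_sum, hα1, _root_.map_one, one_mul]
  congr 1
  simp only [dotProduct, Finset.mul_sum]
  rw [Finset.sum_comm]
  refine Finset.sum_congr rfl fun j _ => ?_
  rw [map_sum, Finset.sum_mul]
  exact Finset.sum_congr rfl fun i _ => by rw [_root_.map_mul]; ring
end
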